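/- arXiv:2209.09856 — 2 statements merged into one kernel-verified Lean document; each statement's English description precedes it below -/
import Mathlib

section
/- Let Ω be a probability space and N, M ≥ 1. Let h̃₀ : Ω → ℂ^N, h̃₂ : Ω → ℂ^M and H̃₁ : Ω → ℂ^{M×N} be random arrays whose N + M + MN scalar entries form a mutually independent family of standard complex random variables. Let h̄₀ ∈ ℂ^N and h̄₂ ∈ ℂ^M with ‖h̄₂‖² = M, let H̄₁ = a bᴴ be a rank-one matrix with a ∈ ℂ^M, b ∈ ℂ^N and ‖a‖² = M, and let Ξ = diag(ξ₁,…,ξ_M) with |ξ_m| = 1 for all m. Let δ₀, δ₁, δ₂ > 0 and κ₀, κ₁, κ₂ ≥ 0, and define the Rician channels h₀ = √(δ₀κ₀/(1+κ₀)) h̄₀ + √(δ₀/(1+κ₀)) h̃₀, H₁ = √(δ₁κ₁/(1+κ₁)) H̄₁ + √(δ₁/(1+κ₁)) H̃₁, h₂ = √(δ₂κ₂/(1+κ₂)) h̄₂ + √(δ₂/(1+κ₂)) h̃₂, and the effective channel h = h₀ + H₁ᵀ Ξ h₂ (so hᵀ = h₀ᵀ + h₂ᵀ Ξ H₁). Then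 the N×N matrix E[h* hᵀ], whose (i,j) entry is E[conj(h_i) h_j], equals (δ₀κ₀/(1+κ₀)) h̄₀* h̄₀ᵀ + (δ₀/(1+κ₀) + M δ₁δ₂/(1+κ₁)) I_N + √(δ₀δ₁δ₂ κ₀κ₁κ₂ / ((1+κ₀)(1+κ₁)(1+κ₂))) ( h̄₀* h̄₂ᵀ Ξ H̄₁ + H̄₁ᴴ Ξ* h̄₂* h̄₀ᵀ ) + (M δ₁δ₂ κ₁ / ((1+κ₁)(1+κ₂))) b bᴴ + (δ₁δ₂ κ₁κ₂ / ((1+κ₁)(1+κ₂))) H̄₁ᴴ Ξ* h̄₂* h̄₂ᵀ Ξ H̄₁. -/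
open MeasureTheory ProbabilityTheory Matrix Complex

noncomputable section

/-- A standard complex random variable: measurable, square-integrable,
mean `0` and second absolute moment `1`. -/
def IsStdComplexRV {Ω : Type*} [MeasurableSpace Ω] (μ : Measure Ω) (x : Ω → ℂ) : Prop :=
  Measurable x ∧ MemLp x 2 μ ∧ (∫ ω, x ω ∂μ) = 0 ∧ (∫ ω, ‖x ω‖ ^ 2 ∂μ) = 1

namespace CSIAux
variable {Ω : Type*} [MeasurableSpace Ω] {μ : Measure Ω}

lemma conj_mul_self (z : ℂ) : (starRingEnd ℂ) z * z = ((‖z‖ ^ 2 : ℝ) : ℂ) := by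
  rw [mul_comm, Complex.mul_conj]
  simp [Complex.normSq_eq_norm_sq]

lemma measurable_conj' : Measurable fun z : ℂ => (starRingEnd ℂ) z :=
  Complex.continuous_conj.measurable

lemma integrable_mul_of_memL2 {f g : Ω → ℂ} (hf : MemLp f 2 μ) (hg : MemLp g 2 μ) :
    Integrable (fun ω => f ω * g ω) μ := by
  have h : MemLp (f • g) 1 μ := hg.smul hf
  exact memLp_one_iff_integrable.mp h

lemma memL2_conj {f : Ω → ℂ} (hf : MemLp f 2 μ) :
    MemLp (fun ω => (starRingEnd ℂ) (f ω)) 2 μ := by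
  rw [memLp_two_iff_integrable_sq_norm (Complex.continuous_conj.comp_aestronglyMeasurable hf.1)]
  simp only [RCLike.norm_conj]
  exact (memLp_two_iff_integrable_sq_norm hf.1).mp hf

lemma indep_integral_mul {X Y : Ω → ℂ} (h : IndepFun X Y μ) (hX : Integrable X μ)
    (hY : Integrable Y μ) :
    ∫ ω, X ω * Y ω ∂μ = (∫ ω, X ω ∂μ) * ∫ ω, Y ω ∂μ := by
  have mre : Measurable fun z : ℂ => z.re := Complex.measurable_re
  have mim : Measurable fun z : ℂ => z.im := Complex.measurable_im
  have hXY : Integrable (fun ω => X ω * Y ω) μ := h.integrable_mul hX hY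
  have hXre : Integrable (fun ω => (X ω).re) μ := by simpa using hX.re
  have hXim : Integrable (fun ω => (X ω).im) μ := by simpa using hX.im
  have hYre : Integrable (fun ω => (Y ω).re) μ := by simpa using hY.re
  have hYim : Integrable (fun ω => (Y ω).im) μ := by simpa using hY.im
  have e1 : ∫ ω, (X ω).re * (Y ω).re ∂μ = (∫ ω, (X ω).re ∂μ) * ∫ ω, (Y ω).re ∂μ :=
    IndepFun.integral_fun_mul_eq_mul_integral (h.comp mre mre) hXre.1 hYre.1
  have e2 : ∫ ω, (X ω).im * (Y ω).im ∂μ = (∫ ω, (X ω).im ∂μ) * ∫ ω, (Y ω).im ∂μ :=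
    IndepFun.integral_fun_mul_eq_mul_integral (h.comp mim mim) hXim.1 hYim.1
  have e3 : ∫ ω, (X ω).re * (Y ω).im ∂μ = (∫ ω, (X ω).re ∂μ) * ∫ ω, (Y ω).im ∂μ :=
    IndepFun.integral_fun_mul_eq_mul_integral (h.comp mre mim) hXre.1 hYim.1
  have e4 : ∫ ω, (X ω).im * (Y ω).re ∂μ = (∫ ω, (X ω).im ∂μ) * ∫ ω, (Y ω).re ∂μ :=
    IndepFun.integral_fun_mul_eq_mul_integral (h.comp mim mre) hXim.1 hYre.1
  have i1 : Integrable (fun ω => (X ω).re * (Y ω).re) μ :=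
    IndepFun.integrable_mul (h.comp mre mre) hXre hYre
  have i2 : Integrable (fun ω => (X ω).im * (Y ω).im) μ :=
    IndepFun.integrable_mul (h.comp mim mim) hXim hYim
  have i3 : Integrable (fun ω => (X ω).re * (Y ω).im) μ :=
    IndepFun.integrable_mul (h.comp mre mim) hXre hYim
  have i4 : Integrable (fun ω => (X ω).im * (Y ω).re) μ :=
    IndepFun.integrable_mul (h.comp mim mre) hXim hYre
  have hre : ∀ f : Ω → ℂ, Integrable f μ → ∫ ω, (f ω).re ∂μ = (∫ ω, f ω ∂μ).re := by
    intro f hf; simpa using integral_re hf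
  have him : ∀ f : Ω → ℂ, Integrable f μ → ∫ ω, (f ω).im ∂μ = (∫ ω, f ω ∂μ).im := by
    intro f hf; simpa using integral_im hf
  apply Complex.ext
  · rw [Complex.mul_re, ← hre _ hXY]
    simp_rw [Complex.mul_re]
    rw [integral_sub i1 i2, e1, e2, hre _ hX, hre _ hY, him _ hX, him _ hY]
  · rw [Complex.mul_im, ← him _ hXY]
    simp_rw [Complex.mul_im]
    rw [integral_add i3 i4, e3, e4, hre _ hX, hre _ hY, him _ hX, him _ hY]


lemma memL2_mul_indep {X Y : Ω → ℂ} (h : IndepFun X Y μ) (hX : MemLp X 2 μ)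
    (hY : MemLp Y 2 μ) : MemLp (fun ω => X ω * Y ω) 2 μ := by
  have ham : AEStronglyMeasurable (fun ω => X ω * Y ω) μ := hX.1.mul hY.1
  rw [memLp_two_iff_integrable_sq_norm ham]
  have : (fun ω => ‖X ω * Y ω‖ ^ 2) = fun ω => ‖X ω‖ ^ 2 * ‖Y ω‖ ^ 2 := by
    funext ω; rw [norm_mul, mul_pow]
  rw [this]
  have hm : Measurable fun z : ℂ => ‖z‖ ^ 2 := measurable_norm.pow_const 2
  exact IndepFun.integrable_mul (h.comp hm hm)
    ((memLp_two_iff_integrable_sq_norm hX.1).mp hX)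
    ((memLp_two_iff_integrable_sq_norm hY.1).mp hY)

section Family
variable [IsProbabilityMeasure μ] {ι : Type*} {x : ι → Ω → ℂ}
variable (hstd : ∀ k, IsStdComplexRV μ (x k))
variable (hind : iIndepFun x μ)

include hstd

lemma std_int (k : ι) : Integrable (x k) μ := ((hstd k).2.1).integrable one_le_two

lemma std_int_conj (k : ι) : Integrable (fun ω => (starRingEnd ℂ) (x k ω)) μ :=
  (memL2_conj (hstd k).2.1).integrable one_le_two

lemma std_sq_int (k : ι) : Integrable (fun ω => ‖x k ω‖ ^ 2) μ :=
  (memLp_two_iff_integrable_sq_norm (hstd k).2.1.1).mp (hstd k).2.1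

lemma std_normSq_int (k : ι) : Integrable (fun ω => (starRingEnd ℂ) (x k ω) * x k ω) μ := by
  simp_rw [conj_mul_self]
  exact (std_sq_int hstd k).ofReal

lemma mean0 (k : ι) : ∫ ω, x k ω ∂μ = 0 := (hstd k).2.2.1

lemma conj_mean0 (k : ι) : ∫ ω, (starRingEnd ℂ) (x k ω) ∂μ = 0 := by
  rw [integral_conj, mean0 hstd, _root_.map_zero]

lemma normSq_one (k : ι) : ∫ ω, (starRingEnd ℂ) (x k ω) * x k ω ∂μ = 1 := by
  simp_rw [conj_mul_self]
  have : ∫ ω, ((‖x k ω‖ ^ 2 : ℝ) : ℂ) ∂μ = ((∫ ω, ‖x k ω‖ ^ 2 ∂μ : ℝ) : ℂ) := integral_ofReal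
  rw [this, (hstd k).2.2.2, Complex.ofReal_one]

include hind

lemma pairE [DecidableEq ι] (k l : ι) :
    ∫ ω, (starRingEnd ℂ) (x k ω) * x l ω ∂μ = if k = l then 1 else 0 := by
  rcases eq_or_ne k l with rfl | hkl
  · rw [if_pos rfl]; exact normSq_one hstd k
  · rw [if_neg hkl]
    have hi : IndepFun (fun ω => (starRingEnd ℂ) (x k ω)) (x l) μ :=
      (hind.indepFun hkl).comp measurable_conj' measurable_id
    rw [indep_integral_mul hi (std_int_conj hstd k) (std_int hstd l), conj_mean0 hstd, zero_mul]

lemma pair_mul_zero {k l : ι} (hkl : k ≠ l) : ∫ ω, x k ω * x l ω ∂μ = 0 := by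
  rw [indep_integral_mul (hind.indepFun hkl) (std_int hstd k) (std_int hstd l),
    mean0 hstd, zero_mul]

lemma pairProd_int (k u : ι) :
    Integrable (fun ω => (starRingEnd ℂ) (x k ω) * x u ω) μ :=
  integrable_mul_of_memL2 (memL2_conj (hstd k).2.1) (hstd u).2.1

lemma triple0 (k : ι) {u v : ι} (huv : u ≠ v) :
    ∫ ω, (starRingEnd ℂ) (x k ω) * (x u ω * x v ω) ∂μ = 0 := by
  have hmeas : ∀ i, Measurable (x i) := fun i => (hstd i).1
  have mφ : Measurable fun z : ℂ => (starRingEnd ℂ) z * z :=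
    measurable_conj'.mul measurable_id
  rcases eq_or_ne k u with rfl | hku
  · -- conj(x k) * (x k * x v) = (conj (x k) * x k) * x v
    have hrw : ∀ ω, (starRingEnd ℂ) (x k ω) * (x k ω * x v ω)
        = ((starRingEnd ℂ) (x k ω) * x k ω) * x v ω := fun ω => by ring
    simp_rw [hrw]
    have hi : IndepFun (fun ω => (starRingEnd ℂ) (x k ω) * x k ω) (x v) μ :=
      (hind.indepFun huv).comp mφ measurable_id
    rw [indep_integral_mul hi (std_normSq_int hstd k) (std_int hstd v), mean0 hstd, mul_zero]
  rcases eq_or_ne k v with rfl | hkv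
  · have hrw : ∀ ω, (starRingEnd ℂ) (x k ω) * (x u ω * x k ω)
        = x u ω * ((starRingEnd ℂ) (x k ω) * x k ω) := fun ω => by ring
    simp_rw [hrw]
    have hi : IndepFun (x u) (fun ω => (starRingEnd ℂ) (x k ω) * x k ω) μ :=
      (hind.indepFun huv).comp measurable_id mφ
    rw [indep_integral_mul hi (std_int hstd u) (std_normSq_int hstd k), mean0 hstd, zero_mul]
  · have hi0 : IndepFun (x k) (x u * x v) μ :=
      hind.indepFun_mul_right hmeas k u v hku hkv
    have hi : IndepFun (fun ω => (starRingEnd ℂ) (x k ω)) (fun ω => x u ω * x v ω) μ :=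
      hi0.comp measurable_conj' measurable_id
    have hint : Integrable (fun ω => x u ω * x v ω) μ :=
      integrable_mul_of_memL2 (hstd u).2.1 (hstd v).2.1
    rw [indep_integral_mul hi (std_int_conj hstd k) hint, conj_mean0 hstd, zero_mul]

lemma quad [DecidableEq ι] {k u l v : ι} (hkl : k ≠ l) (hkv : k ≠ v) (hul : u ≠ l)
    (huv : u ≠ v) :
    ∫ ω, ((starRingEnd ℂ) (x k ω) * x u ω) * ((starRingEnd ℂ) (x l ω) * x v ω) ∂μ
      = (if k = u then 1 else 0) * (if l = v then 1 else 0) := by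
  have hmeas : ∀ i, Measurable (x i) := fun i => (hstd i).1
  have mφ : Measurable fun p : ℂ × ℂ => (starRingEnd ℂ) p.1 * p.2 :=
    (measurable_conj'.comp measurable_fst).mul measurable_snd
  have hi : IndepFun (fun ω => (starRingEnd ℂ) (x k ω) * x u ω)
      (fun ω => (starRingEnd ℂ) (x l ω) * x v ω) μ :=
    (hind.indepFun_prodMk_prodMk hmeas k u l v hkl hkv hul huv).comp mφ mφ
  rw [indep_integral_mul hi (pairProd_int hstd hind k u) (pairProd_int hstd hind l v),
    pairE hstd hind, pairE hstd hind]

end Family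

abbrev ridx (N M : ℕ) := Fin N ⊕ (Fin M ⊕ Fin M × Fin N)
abbrev bidx (N M : ℕ) := Unit ⊕ (ridx N M ⊕ Fin M × Fin N)

def efun {Ω : Type*} {N M : ℕ} (x : ridx N M → Ω → ℂ) : bidx N M → Ω → ℂ
  | .inl _ => fun _ => 1
  | .inr (.inl k) => x k
  | .inr (.inr p) => fun ω => x (.inr (.inr p)) ω * x (.inr (.inl p.1)) ω

section Basis
variable [IsProbabilityMeasure μ] {N M : ℕ} {x : ridx N M → Ω → ℂ}
variable (hstd : ∀ k, IsStdComplexRV μ (x k))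
variable (hind : iIndepFun x μ)

include hstd hind

lemma memL2_e (t : bidx N M) : MemLp (efun x t) 2 μ := by
  rcases t with _ | (k | p)
  · exact memLp_const 1
  · exact (hstd k).2.1
  · exact memL2_mul_indep (hind.indepFun (by simp)) (hstd _).2.1 (hstd _).2.1

lemma ortho (t s : bidx N M) :
    ∫ ω, (starRingEnd ℂ) (efun x t ω) * efun x s ω ∂μ = if t = s then 1 else 0 := by
  rcases t with _ | (k | p) <;> rcases s with _ | (l | q)
  · simp [efun]
  · simp only [efun, _root_.map_one, one_mul]
    rw [mean0 hstd]
    simp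
  · simp only [efun, _root_.map_one, one_mul]
    rw [pair_mul_zero hstd hind (by simp)]
    simp
  · simp only [efun, mul_one]
    rw [conj_mean0 hstd]
    simp
  · simp only [efun]
    rw [pairE hstd hind k l]
    by_cases h : k = l <;> simp [h]
  · simp only [efun]
    rw [triple0 hstd hind k (by simp)]
    simp
  · simp only [efun, mul_one]
    have : ∫ ω, (starRingEnd ℂ) (x (.inr (.inr p)) ω * x (.inr (.inl p.1)) ω) ∂μ
        = (starRingEnd ℂ) (∫ ω, x (.inr (.inr p)) ω * x (.inr (.inl p.1)) ω ∂μ) :=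
      integral_conj
    rw [this, pair_mul_zero hstd hind (by simp), _root_.map_zero]
    simp
  · have hrw : ∀ ω, (starRingEnd ℂ) (x (.inr (.inr p)) ω * x (.inr (.inl p.1)) ω) * x l ω
        = (starRingEnd ℂ) ((starRingEnd ℂ) (x l ω)
            * (x (.inr (.inr p)) ω * x (.inr (.inl p.1)) ω)) := by
      intro ω; simp only [_root_.map_mul, Complex.conj_conj]; ring
    simp only [efun]
    simp_rw [hrw]
    rw [integral_conj, triple0 hstd hind _ (by simp), _root_.map_zero]
    simp
  · have hrw : ∀ ω, (starRingEnd ℂ) (x (.inr (.inr p)) ω * x (.inr (.inl p.1)) ω)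
        * (x (.inr (.inr q)) ω * x (.inr (.inl q.1)) ω)
        = ((starRingEnd ℂ) (x (.inr (.inr p)) ω) * x (.inr (.inr q)) ω)
          * ((starRingEnd ℂ) (x (.inr (.inl p.1)) ω) * x (.inr (.inl q.1)) ω) := by
      intro ω; simp only [_root_.map_mul]; ring
    simp only [efun]
    simp_rw [hrw]
    rw [quad hstd hind (by simp) (by simp) (by simp) (by simp)]
    rcases p with ⟨m, n⟩; rcases q with ⟨m', n'⟩
    simp only [Sum.inr.injEq, Sum.inl.injEq, Prod.mk.injEq]
    split_ifs <;> simp_all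

lemma integral_conj_mul_sum (cI cJ : bidx N M → ℂ) :
    ∫ ω, (starRingEnd ℂ) (∑ t, cI t * efun x t ω) * (∑ t, cJ t * efun x t ω) ∂μ
      = ∑ t, (starRingEnd ℂ) (cI t) * cJ t := by
  have h1 : ∀ ω, (starRingEnd ℂ) (∑ t, cI t * efun x t ω) * (∑ t, cJ t * efun x t ω)
      = ∑ p : bidx N M × bidx N M, ((starRingEnd ℂ) (cI p.1) * cJ p.2)
          * ((starRingEnd ℂ) (efun x p.1 ω) * efun x p.2 ω) := by
    intro ω
    rw [_root_.map_sum, Finset.sum_mul_sum, Fintype.sum_prod_type]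
    apply Finset.sum_congr rfl; intro t _
    apply Finset.sum_congr rfl; intro u _
    simp only [_root_.map_mul]; ring
  simp_rw [h1]
  rw [integral_finset_sum _ (fun p _ => ((integrable_mul_of_memL2
    (memL2_conj (memL2_e hstd hind p.1)) (memL2_e hstd hind p.2)).const_mul _))]
  simp_rw [MeasureTheory.integral_const_mul, ortho hstd hind]
  rw [Fintype.sum_prod_type]
  simp [mul_ite, mul_one, mul_zero, Finset.sum_ite_eq]

end Basis

/-- Coefficients of the effective channel entry `h_j` in the orthonormal family `efun`. -/
def cfun {N M : ℕ} (hbar0 : Fin N → ℂ) (hbar2 : Fin M → ℂ) (avec : Fin M → ℂ)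
    (bvec : Fin N → ℂ) (ξ : Fin M → ℂ) (c0 s0 c1 s1 c2 s2 : ℂ) (j : Fin N) :
    bidx N M → ℂ
  | .inl _ => c0 * hbar0 j + c1 * c2 * (∑ m, avec m * ξ m * hbar2 m) * (starRingEnd ℂ) (bvec j)
  | .inr (.inl (.inl n)) => if n = j then s0 else 0
  | .inr (.inl (.inr (.inl m))) => c1 * s2 * avec m * (starRingEnd ℂ) (bvec j) * ξ m
  | .inr (.inl (.inr (.inr p))) => if p.2 = j then s1 * c2 * ξ p.1 * hbar2 p.1 else 0
  | .inr (.inr p) => if p.2 = j then s1 * s2 * ξ p.1 else 0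

lemma ite_conj_mul_sum {α : Type*} [Fintype α] [DecidableEq α] (i j : α) (f g : α → ℂ) :
    ∑ n, (starRingEnd ℂ) (if n = i then f n else 0) * (if n = j then g n else 0)
      = if i = j then (starRingEnd ℂ) (f i) * g i else 0 := by
  rcases eq_or_ne i j with rfl | hij
  · rw [if_pos rfl, Finset.sum_eq_single i]
    · simp
    · intro n _ hn; simp [hn]
    · simp
  · rw [if_neg hij]
    apply Finset.sum_eq_zero; intro n _
    rcases eq_or_ne n i with rfl | hni
    · simp [hij]
    · simp [hni]

lemma mul_vecMulVec_mul {l m n p : Type*} [Fintype m] [Fintype n]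
    (A : Matrix l m ℂ) (u : m → ℂ) (v : n → ℂ) (B : Matrix n p ℂ) :
    A * Matrix.vecMulVec u v * B
      = Matrix.vecMulVec (A.mulVec u) (Matrix.vecMul v B) := by
  ext i j
  simp only [Matrix.mul_apply, Matrix.vecMulVec_apply, Matrix.mulVec, Matrix.vecMul,
    dotProduct]
  rw [Finset.sum_mul_sum]
  simp_rw [Finset.sum_mul]
  rw [Finset.sum_comm]
  exact Finset.sum_congr rfl fun k1 _ => Finset.sum_congr rfl fun k2 _ => by ring

end CSIAux

/-- The combined family of the `N + M + M*N` scalar entries of the NLoS components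
`htil0 : Ω → ℂ^N`, `htil2 : Ω → ℂ^M`, `Htil1 : Ω → ℂ^{M×N}`. -/
def rvFamily {Ω : Type*} {N M : ℕ} (htil0 : Ω → Fin N → ℂ) (htil2 : Ω → Fin M → ℂ)
    (Htil1 : Ω → Matrix (Fin M) (Fin N) ℂ) :
    (Fin N ⊕ (Fin M ⊕ Fin M × Fin N)) → Ω → ℂ
  | .inl n => fun ω => htil0 ω n
  | .inr (.inl m) => fun ω => htil2 ω m
  | .inr (.inr p) => fun ω => Htil1 ω p.1 p.2

/-- Theorem 1 of the paper: the second-order statistics of the effective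
RIS-aided channel `h = h₀ + H₁ᵀ Ξ h₂` with mutually independent Rician channels
`h₀ = √(δ₀κ₀/(1+κ₀)) h̄₀ + √(δ₀/(1+κ₀)) h̃₀`, `H₁ = √(δ₁κ₁/(1+κ₁)) H̄₁ + √(δ₁/(1+κ₁)) H̃₁`,
`h₂ = √(δ₂κ₂/(1+κ₂)) h̄₂ + √(δ₂/(1+κ₂)) h̃₂`, where `H̄₁ = a bᴴ`, `‖a‖² = ‖h̄₂‖² = M`, and
`Ξ = diag(ξ)` with unit-modulus entries:
`E[h* hᵀ] = (δ₀κ₀/(1+κ₀)) h̄₀* h̄₀ᵀ + (δ₀/(1+κ₀) + Mδ₁δ₂/(1+κ₁)) I_N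
  + √(δ₀δ₁δ₂κ₀κ₁κ₂/((1+κ₀)(1+κ₁)(1+κ₂))) (h̄₀* h̄₂ᵀ Ξ H̄₁ + H̄₁ᴴ Ξ* h̄₂* h̄₀ᵀ)
  + (Mδ₁δ₂κ₁/((1+κ₁)(1+κ₂))) b bᴴ
  + (δ₁δ₂κ₁κ₂/((1+κ₁)(1+κ₂))) H̄₁ᴴ Ξ* h̄₂* h̄₂ᵀ Ξ H̄₁`. -/
theorem statistical_CSI_effective_channel_correlation
    {Ω : Type*} [MeasurableSpace Ω] (μ : Measure Ω) [IsProbabilityMeasure μ]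
    (N M : ℕ) (hN : 1 ≤ N) (hM : 1 ≤ M)
    (htil0 : Ω → Fin N → ℂ) (htil2 : Ω → Fin M → ℂ) (Htil1 : Ω → Matrix (Fin M) (Fin N) ℂ)
    (hstd : ∀ k, IsStdComplexRV μ (rvFamily htil0 htil2 Htil1 k))
    (hindep : iIndepFun (rvFamily htil0 htil2 Htil1) μ)
    (hbar0 : Fin N → ℂ)
    (hbar2 : Fin M → ℂ) (hhbar2 : ∑ m, ‖hbar2 m‖ ^ 2 = (M : ℝ))
    (a : Fin M → ℂ) (b : Fin N → ℂ) (ha : ∑ m, ‖a m‖ ^ 2 = (M : ℝ))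
    (Hbar1 : Matrix (Fin M) (Fin N) ℂ)
    (hHbar1 : Hbar1 = Matrix.vecMulVec a (fun j => (starRingEnd ℂ) (b j)))
    (ξ : Fin M → ℂ) (hξ : ∀ m, ‖ξ m‖ = 1)
    (Ξ : Matrix (Fin M) (Fin M) ℂ) (hΞ : Ξ = Matrix.diagonal ξ)
    (δ0 δ1 δ2 : ℝ) (hδ0 : 0 < δ0) (hδ1 : 0 < δ1) (hδ2 : 0 < δ2)
    (κ0 κ1 κ2 : ℝ) (hκ0 : 0 ≤ κ0) (hκ1 : 0 ≤ κ1) (hκ2 : 0 ≤ κ2)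
    (h0 : Ω → Fin N → ℂ)
    (hh0 : ∀ ω n, h0 ω n =
      (Real.sqrt (δ0 * κ0 / (1 + κ0)) : ℂ) * hbar0 n
        + (Real.sqrt (δ0 / (1 + κ0)) : ℂ) * htil0 ω n)
    (H1 : Ω → Matrix (Fin M) (Fin N) ℂ)
    (hH1 : ∀ ω, H1 ω =
      (Real.sqrt (δ1 * κ1 / (1 + κ1)) : ℂ) • Hbar1
        + (Real.sqrt (δ1 / (1 + κ1)) : ℂ) • Htil1 ω)
    (h2 : Ω → Fin M → ℂ)
    (hh2 : ∀ ω m, h2 ω m =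
      (Real.sqrt (δ2 * κ2 / (1 + κ2)) : ℂ) * hbar2 m
        + (Real.sqrt (δ2 / (1 + κ2)) : ℂ) * htil2 ω m)
    (h : Ω → Fin N → ℂ)
    (hh : ∀ ω, h ω = h0 ω + (H1 ω)ᵀ.mulVec (Ξ.mulVec (h2 ω))) :
    (Matrix.of fun i j : Fin N => ∫ ω, (starRingEnd ℂ) (h ω i) * h ω j ∂μ) =
      ((δ0 * κ0 / (1 + κ0) : ℝ) : ℂ) •
          Matrix.vecMulVec (fun i => (starRingEnd ℂ) (hbar0 i)) hbar0
        + ((δ0 / (1 + κ0) + M * δ1 * δ2 / (1 + κ1) : ℝ) : ℂ) •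
            (1 : Matrix (Fin N) (Fin N) ℂ)
        + (Real.sqrt (δ0 * δ1 * δ2 * κ0 * κ1 * κ2 /
              ((1 + κ0) * (1 + κ1) * (1 + κ2))) : ℂ) •
            (Matrix.vecMulVec (fun i => (starRingEnd ℂ) (hbar0 i))
                (Matrix.vecMul hbar2 (Ξ * Hbar1))
              + Matrix.vecMulVec
                  ((Hbar1ᴴ * Ξ.map (starRingEnd ℂ)).mulVec
                    (fun m => (starRingEnd ℂ) (hbar2 m))) hbar0)
        + ((M * δ1 * δ2 * κ1 / ((1 + κ1) * (1 + κ2)) : ℝ) : ℂ) •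
            Matrix.vecMulVec b (fun j => (starRingEnd ℂ) (b j))
        + ((δ1 * δ2 * κ1 * κ2 / ((1 + κ1) * (1 + κ2)) : ℝ) : ℂ) •
            (Hbar1ᴴ * Ξ.map (starRingEnd ℂ)
              * Matrix.vecMulVec (fun m => (starRingEnd ℂ) (hbar2 m)) hbar2
              * Ξ * Hbar1) := by
  classical
  subst hHbar1
  subst hΞ
  set c0 : ℂ := (Real.sqrt (δ0 * κ0 / (1 + κ0)) : ℂ) with hc0
  set s0 : ℂ := (Real.sqrt (δ0 / (1 + κ0)) : ℂ) with hs0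
  set c1 : ℂ := (Real.sqrt (δ1 * κ1 / (1 + κ1)) : ℂ) with hc1
  set s1 : ℂ := (Real.sqrt (δ1 / (1 + κ1)) : ℂ) with hs1
  set c2 : ℂ := (Real.sqrt (δ2 * κ2 / (1 + κ2)) : ℂ) with hc2
  set s2 : ℂ := (Real.sqrt (δ2 / (1 + κ2)) : ℂ) with hs2
  set x : CSIAux.ridx N M → Ω → ℂ := rvFamily htil0 htil2 Htil1 with hxdef
  have hdecomp : ∀ ω j, h ω j =
      ∑ t, CSIAux.cfun hbar0 hbar2 a b ξ c0 s0 c1 s1 c2 s2 j t * CSIAux.efun x t ω := by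
    intro ω j
    have hA : c1 * c2 * (∑ m, a m * ξ m * hbar2 m) * (starRingEnd ℂ) (b j)
        = ∑ m, c1 * c2 * (a m * ξ m * hbar2 m) * (starRingEnd ℂ) (b j) := by
      rw [Finset.mul_sum, Finset.sum_mul]
    rw [hh]
    simp only [Pi.add_apply, Matrix.mulVec, dotProduct, Matrix.transpose_apply,
      Matrix.diagonal, Matrix.of_apply, hh0, hH1, hh2, Matrix.add_apply, Matrix.smul_apply,
      Matrix.vecMulVec_apply, smul_eq_mul, CSIAux.cfun, CSIAux.efun, rvFamily,
      Fintype.sum_sum_type, Fintype.sum_prod_type, ite_mul, zero_mul, hxdef,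
      Finset.sum_ite_eq', Finset.sum_ite_eq, Finset.mem_univ, if_pos, mul_one,
      Finset.univ_unique, Finset.sum_singleton]
    have hL : ∑ m, (c1 * (a m * (starRingEnd ℂ) (b j)) + s1 * Htil1 ω m j)
          * (ξ m * (c2 * hbar2 m + s2 * htil2 ω m))
        = ∑ m, (c1 * c2 * (a m * ξ m * hbar2 m) * (starRingEnd ℂ) (b j)
            + (c1 * s2 * a m * (starRingEnd ℂ) (b j) * ξ m * htil2 ω m
              + s1 * c2 * ξ m * hbar2 m * Htil1 ω m j
              + s1 * s2 * ξ m * (Htil1 ω m j * htil2 ω m))) :=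
      Finset.sum_congr rfl fun m _ => by ring
    rw [hL, Finset.sum_add_distrib, Finset.sum_add_distrib, Finset.sum_add_distrib, ← hA]
    ring
  have hkey : ∀ i j : Fin N, (∫ ω, (starRingEnd ℂ) (h ω i) * h ω j ∂μ)
      = ∑ t, (starRingEnd ℂ) (CSIAux.cfun hbar0 hbar2 a b ξ c0 s0 c1 s1 c2 s2 i t)
          * CSIAux.cfun hbar0 hbar2 a b ξ c0 s0 c1 s1 c2 s2 j t := by
    intro i j
    simp_rw [hdecomp]
    exact CSIAux.integral_conj_mul_sum hstd hindep _ _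
  have hc0c : (starRingEnd ℂ) c0 = c0 := by rw [hc0]; exact Complex.conj_ofReal _
  have hs0c : (starRingEnd ℂ) s0 = s0 := by rw [hs0]; exact Complex.conj_ofReal _
  have hc1c : (starRingEnd ℂ) c1 = c1 := by rw [hc1]; exact Complex.conj_ofReal _
  have hs1c : (starRingEnd ℂ) s1 = s1 := by rw [hs1]; exact Complex.conj_ofReal _
  have hc2c : (starRingEnd ℂ) c2 = c2 := by rw [hc2]; exact Complex.conj_ofReal _
  have hs2c : (starRingEnd ℂ) s2 = s2 := by rw [hs2]; exact Complex.conj_ofReal _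
  have h1κ0 : (0:ℝ) < 1 + κ0 := by linarith
  have h1κ1 : (0:ℝ) < 1 + κ1 := by linarith
  have h1κ2 : (0:ℝ) < 1 + κ2 := by linarith
  have hsq : ∀ r : ℝ, 0 ≤ r → ((Real.sqrt r : ℝ) : ℂ) * ((Real.sqrt r : ℝ) : ℂ) = (r : ℂ) :=
    fun r hr => by rw [← Complex.ofReal_mul, Real.mul_self_sqrt hr]
  have hc0sq : c0 * c0 = ((δ0 * κ0 / (1 + κ0) : ℝ) : ℂ) := by
    rw [hc0]; exact hsq _ (by positivity)
  have hs0sq : s0 * s0 = ((δ0 / (1 + κ0) : ℝ) : ℂ) := by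
    rw [hs0]; exact hsq _ (by positivity)
  have hc1sq : c1 * c1 = ((δ1 * κ1 / (1 + κ1) : ℝ) : ℂ) := by
    rw [hc1]; exact hsq _ (by positivity)
  have hs1sq : s1 * s1 = ((δ1 / (1 + κ1) : ℝ) : ℂ) := by
    rw [hs1]; exact hsq _ (by positivity)
  have hc2sq : c2 * c2 = ((δ2 * κ2 / (1 + κ2) : ℝ) : ℂ) := by
    rw [hc2]; exact hsq _ (by positivity)
  have hs2sq : s2 * s2 = ((δ2 / (1 + κ2) : ℝ) : ℂ) := by
    rw [hs2]; exact hsq _ (by positivity)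
  have hξ1 : ∀ m, (starRingEnd ℂ) (ξ m) * ξ m = 1 := fun m => by
    rw [CSIAux.conj_mul_self, hξ m]; norm_num
  have haM : ∑ m, (starRingEnd ℂ) (a m) * a m = ((M : ℕ) : ℂ) := by
    simp_rw [CSIAux.conj_mul_self]
    exact_mod_cast congrArg (Complex.ofReal) ha
  have hh2M : ∑ m, (starRingEnd ℂ) (hbar2 m) * hbar2 m = ((M : ℕ) : ℂ) := by
    simp_rw [CSIAux.conj_mul_self]
    exact_mod_cast congrArg (Complex.ofReal) hhbar2
  set S : ℂ := ∑ m, a m * ξ m * hbar2 m with hS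
  have hv1 : Matrix.vecMul hbar2
        (Matrix.diagonal ξ * Matrix.vecMulVec a fun j => (starRingEnd ℂ) (b j))
      = fun j => S * (starRingEnd ℂ) (b j) := by
    funext j
    simp only [Matrix.vecMul, dotProduct, Matrix.diagonal_mul, Matrix.vecMulVec_apply]
    rw [hS, Finset.sum_mul]
    exact Finset.sum_congr rfl fun m _ => by ring
  have hv2 : ((Matrix.vecMulVec a fun j => (starRingEnd ℂ) (b j))ᴴ
          * (Matrix.diagonal ξ).map (starRingEnd ℂ)).mulVec (fun m => (starRingEnd ℂ) (hbar2 m))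
      = fun i => (starRingEnd ℂ) S * b i := by
    funext i
    simp only [Matrix.mulVec, dotProduct, Matrix.mul_apply, Matrix.conjTranspose_apply,
      Matrix.vecMulVec_apply, Matrix.map_apply, Matrix.diagonal_apply, _root_.map_mul,
      Complex.conj_conj, apply_ite (starRingEnd ℂ), _root_.map_zero, mul_ite, ite_mul,
      mul_zero, zero_mul, Finset.sum_ite_eq', Finset.mem_univ, if_true]
    rw [hS, _root_.map_sum, Finset.sum_mul]
    exact Finset.sum_congr rfl fun m _ => by simp only [Complex.star_def, _root_.map_mul, Complex.conj_conj]; ring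
  have hlast : (Matrix.vecMulVec a fun j => (starRingEnd ℂ) (b j))ᴴ
        * (Matrix.diagonal ξ).map (starRingEnd ℂ)
        * Matrix.vecMulVec (fun m => (starRingEnd ℂ) (hbar2 m)) hbar2
        * Matrix.diagonal ξ * Matrix.vecMulVec a (fun j => (starRingEnd ℂ) (b j))
      = Matrix.vecMulVec (fun i => (starRingEnd ℂ) S * b i)
          (fun j => S * (starRingEnd ℂ) (b j)) := by
    rw [Matrix.mul_assoc ((Matrix.vecMulVec a fun j => (starRingEnd ℂ) (b j))ᴴ
        * (Matrix.diagonal ξ).map (starRingEnd ℂ)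
        * Matrix.vecMulVec (fun m => (starRingEnd ℂ) (hbar2 m)) hbar2),
      CSIAux.mul_vecMulVec_mul, hv1, hv2]
  have hT3 : ∀ i j : Fin N, ∑ m, (starRingEnd ℂ) (c1 * s2 * a m * (starRingEnd ℂ) (b i) * ξ m)
        * (c1 * s2 * a m * (starRingEnd ℂ) (b j) * ξ m)
      = ((M : ℕ) : ℂ) * ((c1 * c1) * (s2 * s2)) * (b i * (starRingEnd ℂ) (b j)) := by
    intro i j
    have step : ∀ m : Fin M, (starRingEnd ℂ) (c1 * s2 * a m * (starRingEnd ℂ) (b i) * ξ m)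
          * (c1 * s2 * a m * (starRingEnd ℂ) (b j) * ξ m)
        = ((starRingEnd ℂ) (a m) * a m)
            * ((c1 * c1) * (s2 * s2) * (b i * (starRingEnd ℂ) (b j))) := by
      intro m
      calc (starRingEnd ℂ) (c1 * s2 * a m * (starRingEnd ℂ) (b i) * ξ m)
            * (c1 * s2 * a m * (starRingEnd ℂ) (b j) * ξ m)
          = ((starRingEnd ℂ) (ξ m) * ξ m) * ((starRingEnd ℂ) (a m) * a m
              * ((c1 * c1) * (s2 * s2) * (b i * (starRingEnd ℂ) (b j)))) := by
            simp only [_root_.map_mul, Complex.conj_conj, hc1c, hs2c]; ring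
        _ = _ := by rw [hξ1 m, one_mul]
    rw [Finset.sum_congr rfl fun m _ => step m, ← Finset.sum_mul, haM, ← mul_assoc]
  have hT4 : ∑ m, (starRingEnd ℂ) (s1 * c2 * ξ m * hbar2 m) * (s1 * c2 * ξ m * hbar2 m)
      = ((M : ℕ) : ℂ) * ((s1 * s1) * (c2 * c2)) := by
    have step : ∀ m : Fin M, (starRingEnd ℂ) (s1 * c2 * ξ m * hbar2 m)
          * (s1 * c2 * ξ m * hbar2 m)
        = ((starRingEnd ℂ) (hbar2 m) * hbar2 m) * ((s1 * s1) * (c2 * c2)) := by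
      intro m
      calc (starRingEnd ℂ) (s1 * c2 * ξ m * hbar2 m) * (s1 * c2 * ξ m * hbar2 m)
          = ((starRingEnd ℂ) (ξ m) * ξ m)
              * ((starRingEnd ℂ) (hbar2 m) * hbar2 m * ((s1 * s1) * (c2 * c2))) := by
            simp only [_root_.map_mul, hs1c, hc2c]; ring
        _ = _ := by rw [hξ1 m, one_mul]
    rw [Finset.sum_congr rfl fun m _ => step m, ← Finset.sum_mul, hh2M]
  have hT5 : ∑ m : Fin M, (starRingEnd ℂ) (s1 * s2 * ξ m) * (s1 * s2 * ξ m)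
      = ((M : ℕ) : ℂ) * ((s1 * s1) * (s2 * s2)) := by
    have step : ∀ m : Fin M, (starRingEnd ℂ) (s1 * s2 * ξ m) * (s1 * s2 * ξ m)
        = (s1 * s1) * (s2 * s2) := by
      intro m
      calc (starRingEnd ℂ) (s1 * s2 * ξ m) * (s1 * s2 * ξ m)
          = ((starRingEnd ℂ) (ξ m) * ξ m) * ((s1 * s1) * (s2 * s2)) := by
            simp only [_root_.map_mul, hs1c, hs2c]; ring
        _ = _ := by rw [hξ1 m, one_mul]
    rw [Finset.sum_congr rfl fun m _ => step m, Finset.sum_const]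
    simp [mul_comm, mul_assoc]
  have hcross : c0 * (c1 * c2) = ((Real.sqrt (δ0 * δ1 * δ2 * κ0 * κ1 * κ2 /
      ((1 + κ0) * (1 + κ1) * (1 + κ2))) : ℝ) : ℂ) := by
    rw [hc0, hc1, hc2, ← Complex.ofReal_mul, ← Complex.ofReal_mul,
      ← Real.sqrt_mul (by positivity), ← Real.sqrt_mul (by positivity)]
    congr 2
    field_simp
  have hI : s0 * s0 + ((M : ℕ) : ℂ) * ((s1 * s1) * (c2 * c2))
        + ((M : ℕ) : ℂ) * ((s1 * s1) * (s2 * s2))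
      = ((δ0 / (1 + κ0) + M * δ1 * δ2 / (1 + κ1) : ℝ) : ℂ) := by
    rw [hs0sq, hs1sq, hc2sq, hs2sq]
    have hr : δ0 / (1 + κ0) + (M : ℝ) * (δ1 / (1 + κ1) * (δ2 * κ2 / (1 + κ2)))
        + (M : ℝ) * (δ1 / (1 + κ1) * (δ2 / (1 + κ2)))
        = δ0 / (1 + κ0) + M * δ1 * δ2 / (1 + κ1) := by
      field_simp
      ring
    push_cast [← hr]
    ring
  have hB : ((M : ℕ) : ℂ) * ((c1 * c1) * (s2 * s2))
      = ((M * δ1 * δ2 * κ1 / ((1 + κ1) * (1 + κ2)) : ℝ) : ℂ) := by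
    rw [hc1sq, hs2sq]
    have hr : (M : ℝ) * (δ1 * κ1 / (1 + κ1) * (δ2 / (1 + κ2)))
        = M * δ1 * δ2 * κ1 / ((1 + κ1) * (1 + κ2)) := by
      field_simp
    push_cast [← hr]
    ring
  have hL : (c1 * c1) * (c2 * c2)
      = ((δ1 * δ2 * κ1 * κ2 / ((1 + κ1) * (1 + κ2)) : ℝ) : ℂ) := by
    rw [hc1sq, hc2sq]
    have hr : δ1 * κ1 / (1 + κ1) * (δ2 * κ2 / (1 + κ2))
        = δ1 * δ2 * κ1 * κ2 / ((1 + κ1) * (1 + κ2)) := by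
      field_simp
    push_cast [← hr]
    ring
  ext i j
  simp only [Matrix.of_apply]
  rw [hkey i j]
  simp only [CSIAux.cfun, Fintype.sum_sum_type, Fintype.sum_prod_type, Finset.univ_unique,
    Finset.sum_singleton, CSIAux.ite_conj_mul_sum]
  simp only [Matrix.add_apply, Matrix.smul_apply, smul_eq_mul, hv1, hv2, hlast,
    Matrix.vecMulVec_apply, Matrix.one_apply]
  rcases eq_or_ne i j with rfl | hij
  · simp only [eq_self_iff_true, if_true]
    rw [hT3 i i, hT4, hT5]
    simp only [_root_.map_add, _root_.map_mul, Complex.conj_conj, hc0c, hc1c, hc2c, hs0c,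
      hs1c, hs2c]
    linear_combination ((starRingEnd ℂ) (hbar0 i) * hbar0 i) * hc0sq + hI
      + (b i * (starRingEnd ℂ) (b i)) * hB
      + ((starRingEnd ℂ) (hbar0 i) * S * (starRingEnd ℂ) (b i)
          + (starRingEnd ℂ) S * b i * hbar0 i) * hcross
      + ((starRingEnd ℂ) S * b i * S * (starRingEnd ℂ) (b i)) * hL
  · simp only [hij, if_false, Finset.sum_const_zero]
    rw [hT3 i j]
    simp only [_root_.map_add, _root_.map_mul, Complex.conj_conj, hc0c, hc1c, hc2c, hs0c,
      hs1c, hs2c]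
    linear_combination ((starRingEnd ℂ) (hbar0 i) * hbar0 j) * hc0sq
      + (b i * (starRingEnd ℂ) (b j)) * hB
      + ((starRingEnd ℂ) (hbar0 i) * S * (starRingEnd ℂ) (b j)
          + (starRingEnd ℂ) S * b i * hbar0 j) * hcross
      + ((starRingEnd ℂ) S * b i * S * (starRingEnd ℂ) (b j)) * hL
end
end

section
/- Let Ω be a probability space and N, M ≥ 1. Let h̃₂ : Ω → ℂ^M and H̃₁ : Ω → ℂ^{M×N} be random arrays whose M + MN scalar entries form a mutually independent family of standard complex random variables. Let h̄₂ ∈ ℂ^M with ‖h̄₂‖² = M, let H̄₁ = a bᴴ with a ∈ ℂ^M, b ∈ ℂ^N and ‖a‖² = M, and let Ξ = diag(ξ₁,…,ξ_M) with |ξ_m| = 1 for all m. Let δ₁, δ₂ > 0 and κ₁, κ₂ ≥ 0, and define H₁ = √(δ₁κ₁/(1+κ₁)) H̄₁ + √(δ₁/(1+κ₁)) H̃₁ and h₂ = √(δ₂κ₂/(1+κ₂)) h̄₂ + √(δ₂/(1+κ₂)) h̃₂. Then the N×N matrix E[H₁ᴴ Ξ* h₂* h₂ᵀ Ξ H₁]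 (expectation entrywise) equals (M δ₁δ₂/(1+κ₁)) I_N + (M δ₁δ₂ κ₁ / ((1+κ₁)(1+κ₂))) b bᴴ + (δ₁δ₂ κ₁κ₂ / ((1+κ₁)(1+κ₂))) H̄₁ᴴ Ξ* h̄₂* h̄₂ᵀ Ξ H̄₁. -/
open MeasureTheory ProbabilityTheory Matrix Complex

noncomputable section

/-- The combined family of the `M + M*N` scalar entries of the NLoS components
`htil2 : Ω → ℂ^M` and `Htil1 : Ω → ℂ^{M×N}`. -/
def rvFamily2 {Ω : Type*} {N M : ℕ} (htil2 : Ω → Fin M → ℂ)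
    (Htil1 : Ω → Matrix (Fin M) (Fin N) ℂ) :
    (Fin M ⊕ Fin M × Fin N) → Ω → ℂ
  | .inl m => fun ω => htil2 ω m
  | .inr p => fun ω => Htil1 ω p.1 p.2

lemma conj_mul_self' (z : ℂ) : (starRingEnd ℂ) z * z = ((‖z‖ ^ 2 : ℝ) : ℂ) := by
  rw [mul_comm, Complex.mul_conj, Complex.normSq_eq_norm_sq]

lemma MeasureTheory.Integrable.conj'' {Ω : Type*} [MeasurableSpace Ω] {μ : Measure Ω}
    {f : Ω → ℂ} (hf : Integrable f μ) :
    Integrable (fun ω => (starRingEnd ℂ) (f ω)) μ := by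
  refine ⟨Complex.continuous_conj.comp_aestronglyMeasurable hf.1, ?_⟩
  simpa [HasFiniteIntegral] using hf.2

lemma indepFun_integral_mul' {Ω : Type*} [MeasurableSpace Ω] {μ : Measure Ω}
    [IsProbabilityMeasure μ] {X Y : Ω → ℂ} (h : IndepFun X Y μ) (hX : Integrable X μ)
    (hY : Integrable Y μ) :
    ∫ ω, X ω * Y ω ∂μ = (∫ ω, X ω ∂μ) * ∫ ω, Y ω ∂μ := by
  have hXm := hX.aemeasurable
  have hYm := hY.aemeasurable
  rw [indepFun_iff_map_prod_eq_prod_map_map hXm hYm] at h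
  haveI : IsProbabilityMeasure (μ.map X) := Measure.isProbabilityMeasure_map hXm
  haveI : IsProbabilityMeasure (μ.map Y) := Measure.isProbabilityMeasure_map hYm
  have hmap : AEMeasurable (fun ω => (X ω, Y ω)) μ := hXm.prodMk hYm
  have h1 : ∫ ω, X ω * Y ω ∂μ = ∫ p : ℂ × ℂ, p.1 * p.2 ∂(μ.map (fun ω => (X ω, Y ω))) := by
    rw [integral_map hmap]
    exact (measurable_fst.mul measurable_snd).aestronglyMeasurable
  rw [h1, h, integral_prod_mul (fun x : ℂ => x) (fun y : ℂ => y)]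
  congr 1
  · exact integral_map hXm measurable_id.aestronglyMeasurable
  · exact integral_map hYm measurable_id.aestronglyMeasurable

lemma entry_rank_one {M N : ℕ} (ξ : Fin M → ℂ) (w : Fin M → ℂ)
    (A : Matrix (Fin M) (Fin N) ℂ) (i j : Fin N) :
    (Aᴴ * (Matrix.diagonal ξ).map (starRingEnd ℂ)
      * Matrix.vecMulVec (fun m => (starRingEnd ℂ) (w m)) w * Matrix.diagonal ξ * A) i j
    = (starRingEnd ℂ) (∑ m, ξ m * w m * A m i) * ∑ m, ξ m * w m * A m j := by
  have hd : (Matrix.diagonal ξ).map (starRingEnd ℂ)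
      = Matrix.diagonal (fun m => (starRingEnd ℂ) (ξ m)) :=
    Matrix.diagonal_map (map_zero _)
  rw [hd]
  simp only [Matrix.mul_apply, Matrix.conjTranspose_apply, Matrix.vecMulVec_apply,
    Matrix.diagonal_apply, mul_ite, ite_mul, mul_zero, zero_mul, Finset.sum_ite_eq,
    Finset.sum_ite_eq', Finset.mem_univ, if_true, _root_.map_sum, _root_.map_mul,
    Finset.sum_mul, Finset.mul_sum]
  exact Finset.sum_congr rfl fun n _ => Finset.sum_congr rfl fun m _ => by
    simp only [RCLike.star_def]; ring

/-- the quadratic cascaded-channel term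
`E[H₁ᴴ Ξ* h₂* h₂ᵀ Ξ H₁]` with `H̄₁ = a bᴴ`, `‖a‖² = ‖h̄₂‖² = M`, and unit-modulus
diagonal `Ξ`, equals
`(M δ₁δ₂/(1+κ₁)) I_N + (M δ₁δ₂κ₁/((1+κ₁)(1+κ₂))) b bᴴ
  + (δ₁δ₂κ₁κ₂/((1+κ₁)(1+κ₂))) H̄₁ᴴ Ξ* h̄₂* h̄₂ᵀ Ξ H̄₁`. -/
theorem quadratic_cascaded_term_expectation
    {Ω : Type*} [MeasurableSpace Ω] (μ : Measure Ω) [IsProbabilityMeasure μ]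
    (N M : ℕ) (hN : 1 ≤ N) (hM : 1 ≤ M)
    (htil2 : Ω → Fin M → ℂ) (Htil1 : Ω → Matrix (Fin M) (Fin N) ℂ)
    (hstd : ∀ k, IsStdComplexRV μ (rvFamily2 htil2 Htil1 k))
    (hindep : iIndepFun (rvFamily2 htil2 Htil1) μ)
    (hbar2 : Fin M → ℂ) (hhbar2 : ∑ m, ‖hbar2 m‖ ^ 2 = (M : ℝ))
    (a : Fin M → ℂ) (b : Fin N → ℂ) (ha : ∑ m, ‖a m‖ ^ 2 = (M : ℝ))
    (Hbar1 : Matrix (Fin M) (Fin N) ℂ)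
    (hHbar1 : Hbar1 = Matrix.vecMulVec a (fun j => (starRingEnd ℂ) (b j)))
    (ξ : Fin M → ℂ) (hξ : ∀ m, ‖ξ m‖ = 1)
    (Ξ : Matrix (Fin M) (Fin M) ℂ) (hΞ : Ξ = Matrix.diagonal ξ)
    (δ1 δ2 : ℝ) (hδ1 : 0 < δ1) (hδ2 : 0 < δ2)
    (κ1 κ2 : ℝ) (hκ1 : 0 ≤ κ1) (hκ2 : 0 ≤ κ2)
    (H1 : Ω → Matrix (Fin M) (Fin N) ℂ)
    (hH1 : ∀ ω, H1 ω =
      (Real.sqrt (δ1 * κ1 / (1 + κ1)) : ℂ) • Hbar1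
        + (Real.sqrt (δ1 / (1 + κ1)) : ℂ) • Htil1 ω)
    (h2 : Ω → Fin M → ℂ)
    (hh2 : ∀ ω m, h2 ω m =
      (Real.sqrt (δ2 * κ2 / (1 + κ2)) : ℂ) * hbar2 m
        + (Real.sqrt (δ2 / (1 + κ2)) : ℂ) * htil2 ω m) :
    (Matrix.of fun i j : Fin N =>
        ∫ ω, ((H1 ω)ᴴ * Ξ.map (starRingEnd ℂ)
            * Matrix.vecMulVec (fun m => (starRingEnd ℂ) (h2 ω m)) (h2 ω)
            * Ξ * H1 ω) i j ∂μ) =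
      ((M * δ1 * δ2 / (1 + κ1) : ℝ) : ℂ) • (1 : Matrix (Fin N) (Fin N) ℂ)
        + ((M * δ1 * δ2 * κ1 / ((1 + κ1) * (1 + κ2)) : ℝ) : ℂ) •
            Matrix.vecMulVec b (fun j => (starRingEnd ℂ) (b j))
        + ((δ1 * δ2 * κ1 * κ2 / ((1 + κ1) * (1 + κ2)) : ℝ) : ℂ) •
            (Hbar1ᴴ * Ξ.map (starRingEnd ℂ)
              * Matrix.vecMulVec (fun m => (starRingEnd ℂ) (hbar2 m)) hbar2
              * Ξ * Hbar1) := by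
  classical
  set G : (Fin M ⊕ Fin M × Fin N) → Ω → ℂ := rvFamily2 htil2 Htil1 with hGdef
  have hmeas : ∀ k, Measurable (G k) := fun k => (hstd k).1
  have hL2 : ∀ k, MemLp (G k) 2 μ := fun k => (hstd k).2.1
  have hint : ∀ k, Integrable (G k) μ := fun k => (hL2 k).integrable one_le_two
  have hmean : ∀ k, ∫ ω, G k ω ∂μ = 0 := fun k => (hstd k).2.2.1
  have hconjint : ∀ k, Integrable (fun ω => (starRingEnd ℂ) (G k ω)) μ :=
    fun k => (hint k).conj''
  have hmeanconj : ∀ k, ∫ ω, (starRingEnd ℂ) (G k ω) ∂μ = 0 := by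
    intro k; rw [integral_conj, hmean k, map_zero]
  have hsqI : ∀ k, Integrable (fun ω => (starRingEnd ℂ) (G k ω) * G k ω) μ := by
    intro k
    have h1 : Integrable (fun ω => ‖G k ω‖ ^ 2) μ :=
      (memLp_two_iff_integrable_sq_norm (hL2 k).1).mp (hL2 k)
    simp only [conj_mul_self']; exact h1.ofReal (𝕜 := ℂ)
  have hsqE : ∀ k, ∫ ω, (starRingEnd ℂ) (G k ω) * G k ω ∂μ = 1 := by
    intro k
    simp only [conj_mul_self']
    have h0 : ∫ ω, ((‖G k ω‖ ^ 2 : ℝ) : ℂ) ∂μ = ((∫ ω, ‖G k ω‖ ^ 2 ∂μ : ℝ) : ℂ) :=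
      integral_ofReal
    rw [h0, (hstd k).2.2.2, Complex.ofReal_one]
  -- constants
  set cb1 : ℝ := Real.sqrt (δ1 * κ1 / (1 + κ1)) with hcb1def
  set cb2 : ℝ := Real.sqrt (δ1 / (1 + κ1)) with hcb2def
  set db1 : ℝ := Real.sqrt (δ2 * κ2 / (1 + κ2)) with hdb1def
  set db2 : ℝ := Real.sqrt (δ2 / (1 + κ2)) with hdb2def
  have h1κ1 : (0:ℝ) < 1 + κ1 := by linarith
  have h1κ2 : (0:ℝ) < 1 + κ2 := by linarith
  have hcb1 : cb1 * cb1 = δ1 * κ1 / (1 + κ1) :=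
    Real.mul_self_sqrt (div_nonneg (mul_nonneg hδ1.le hκ1) h1κ1.le)
  have hcb2 : cb2 * cb2 = δ1 / (1 + κ1) :=
    Real.mul_self_sqrt (div_nonneg hδ1.le h1κ1.le)
  have hdb1 : db1 * db1 = δ2 * κ2 / (1 + κ2) :=
    Real.mul_self_sqrt (div_nonneg (mul_nonneg hδ2.le hκ2) h1κ2.le)
  have hdb2 : db2 * db2 = δ2 / (1 + κ2) :=
    Real.mul_self_sqrt (div_nonneg hδ2.le h1κ2.le)
  have hxi1 : ∀ m, (starRingEnd ℂ) (ξ m) * ξ m = 1 := by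
    intro m; rw [conj_mul_self', hξ m]; norm_num
  -- the random summands
  set t : Fin M → Fin N → Ω → ℂ := fun m j ω =>
    ξ m * ((db1 : ℂ) * hbar2 m + (db2 : ℂ) * G (Sum.inl m) ω)
        * ((cb1 : ℂ) * Hbar1 m j + (cb2 : ℂ) * G (Sum.inr (m, j)) ω) with htdef
  set Et : Fin M → Fin N → ℂ :=
    fun m j => ξ m * ((db1 : ℂ) * hbar2 m) * ((cb1 : ℂ) * Hbar1 m j) with hEtdef
  have hst : ∀ ω j, (∑ m, ξ m * h2 ω m * H1 ω m j) = ∑ m, t m j ω := by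
    intro ω j
    refine Finset.sum_congr rfl fun m _ => ?_
    rw [hh2, hH1]
    simp only [htdef, Matrix.add_apply, Matrix.smul_apply, smul_eq_mul]
    rfl
  have htexp : ∀ m j, t m j = fun ω =>
      Et m j
      + (ξ m * ((db1 : ℂ) * hbar2 m) * (cb2 : ℂ)) * G (Sum.inr (m, j)) ω
      + (ξ m * (db2 : ℂ) * ((cb1 : ℂ) * Hbar1 m j)) * G (Sum.inl m) ω
      + (ξ m * (db2 : ℂ) * (cb2 : ℂ)) * (G (Sum.inl m) ω * G (Sum.inr (m, j)) ω) := by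
    intro m j; funext ω; simp only [htdef, hEtdef]; ring
  have hXYindep : ∀ m j, IndepFun (G (Sum.inl m)) (G (Sum.inr (m, j))) μ :=
    fun m j => hindep.indepFun (by simp)
  have hXYint : ∀ m j, Integrable (fun ω => G (Sum.inl m) ω * G (Sum.inr (m, j)) ω) μ := by
    intro m j
    exact (hXYindep m j).integrable_mul (hint _) (hint _)
  have hInt_t : ∀ m j, Integrable (t m j) μ := by
    intro m j; rw [htexp]
    exact (((integrable_const _).add ((hint _).const_mul _)).add
      ((hint _).const_mul _)).add ((hXYint m j).const_mul _)
  have hE_t : ∀ m j, ∫ ω, t m j ω ∂μ = Et m j := by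
    intro m j
    have i1 : Integrable (fun _ : Ω => Et m j) μ := integrable_const _
    have i2 : Integrable (fun ω => ξ m * ((db1 : ℂ) * hbar2 m) * (cb2 : ℂ)
        * G (Sum.inr (m, j)) ω) μ := (hint _).const_mul _
    have i3 : Integrable (fun ω => ξ m * (db2 : ℂ) * ((cb1 : ℂ) * Hbar1 m j)
        * G (Sum.inl m) ω) μ := (hint _).const_mul _
    have i4 : Integrable (fun ω => ξ m * (db2 : ℂ) * (cb2 : ℂ)
        * (G (Sum.inl m) ω * G (Sum.inr (m, j)) ω)) μ := (hXYint m j).const_mul _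
    have i12 : Integrable (fun ω => Et m j + ξ m * ((db1 : ℂ) * hbar2 m) * (cb2 : ℂ)
        * G (Sum.inr (m, j)) ω) μ := i1.add i2
    have i123 : Integrable (fun ω => Et m j + ξ m * ((db1 : ℂ) * hbar2 m) * (cb2 : ℂ)
        * G (Sum.inr (m, j)) ω + ξ m * (db2 : ℂ) * ((cb1 : ℂ) * Hbar1 m j)
        * G (Sum.inl m) ω) μ := i12.add i3
    simp only [htexp]
    rw [integral_add i123 i4, integral_add i12 i3, integral_add i1 i2]
    rw [integral_const, integral_const_mul, integral_const_mul, integral_const_mul,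
      hmean, hmean, indepFun_integral_mul' (hXYindep m j) (hint _) (hint _), hmean, hmean]
    simp
  have hconjmeas : Measurable (starRingEnd ℂ) := Complex.continuous_conj.measurable
  -- off-diagonal terms
  have hoff : ∀ (i j : Fin N) (m n : Fin M), m ≠ n →
      Integrable (fun ω => (starRingEnd ℂ) (t m i ω) * t n j ω) μ ∧
      ∫ ω, (starRingEnd ℂ) (t m i ω) * t n j ω ∂μ
        = (starRingEnd ℂ) (Et m i) * Et n j := by
    intro i j m n hmn
    have hpair : IndepFun (fun ω => (G (Sum.inl m) ω, G (Sum.inr (m, i)) ω))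
        (fun ω => (G (Sum.inl n) ω, G (Sum.inr (n, j)) ω)) μ :=
      hindep.indepFun_prodMk_prodMk hmeas _ _ _ _
        (by simp [hmn]) (by simp) (by simp) (by simp [hmn])
    have hbase1 : Measurable (fun p : ℂ × ℂ =>
        ξ m * ((db1 : ℂ) * hbar2 m + (db2 : ℂ) * p.1)
          * ((cb1 : ℂ) * Hbar1 m i + (cb2 : ℂ) * p.2)) := by fun_prop
    have hbase2 : Measurable (fun p : ℂ × ℂ =>
        ξ n * ((db1 : ℂ) * hbar2 n + (db2 : ℂ) * p.1)
          * ((cb1 : ℂ) * Hbar1 n j + (cb2 : ℂ) * p.2)) := by fun_prop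
    have hcomp : IndepFun (fun ω => (starRingEnd ℂ) (t m i ω)) (t n j) μ :=
      hpair.comp (hconjmeas.comp hbase1) hbase2
    constructor
    · exact hcomp.integrable_mul (hInt_t m i).conj'' (hInt_t n j)
    · rw [indepFun_integral_mul' hcomp (hInt_t m i).conj'' (hInt_t n j), integral_conj,
        hE_t, hE_t]
  -- diagonal terms
  have hdiag : ∀ (i j : Fin N) (m : Fin M),
      Integrable (fun ω => (starRingEnd ℂ) (t m i ω) * t m j ω) μ ∧
      ∫ ω, (starRingEnd ℂ) (t m i ω) * t m j ω ∂μ =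
        (((db1 * db1 : ℝ) : ℂ) * ((‖hbar2 m‖ ^ 2 : ℝ) : ℂ) + ((db2 * db2 : ℝ) : ℂ))
        * (((cb1 * cb1 : ℝ) : ℂ) * ((starRingEnd ℂ) (Hbar1 m i) * Hbar1 m j)
            + ((cb2 * cb2 : ℝ) : ℂ) * (if i = j then 1 else 0)) := by
    intro i j m
    set A : Ω → ℂ := fun ω =>
      (starRingEnd ℂ) ((db1 : ℂ) * hbar2 m + (db2 : ℂ) * G (Sum.inl m) ω)
        * ((db1 : ℂ) * hbar2 m + (db2 : ℂ) * G (Sum.inl m) ω) with hAdef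
    set B : Ω → ℂ := fun ω =>
      (starRingEnd ℂ) ((cb1 : ℂ) * Hbar1 m i + (cb2 : ℂ) * G (Sum.inr (m, i)) ω)
        * ((cb1 : ℂ) * Hbar1 m j + (cb2 : ℂ) * G (Sum.inr (m, j)) ω) with hBdef
    have hptw : (fun ω => (starRingEnd ℂ) (t m i ω) * t m j ω) = fun ω => A ω * B ω := by
      funext ω
      calc (starRingEnd ℂ) (t m i ω) * t m j ω
          = ((starRingEnd ℂ) (ξ m) * ξ m) * (A ω * B ω) := by
            simp only [htdef, hAdef, hBdef, _root_.map_mul]; ring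
        _ = A ω * B ω := by rw [hxi1 m, one_mul]
    have hAexp : A = fun ω =>
        ((db1:ℂ) * (starRingEnd ℂ) (hbar2 m)) * ((db1:ℂ) * hbar2 m)
        + ((db1:ℂ) * (starRingEnd ℂ) (hbar2 m) * (db2:ℂ)) * G (Sum.inl m) ω
        + ((db2:ℂ) * ((db1:ℂ) * hbar2 m)) * (starRingEnd ℂ) (G (Sum.inl m) ω)
        + ((db2:ℂ) * (db2:ℂ)) * ((starRingEnd ℂ) (G (Sum.inl m) ω) * G (Sum.inl m) ω) := by
      funext ω
      simp only [hAdef, _root_.map_add, _root_.map_mul, Complex.conj_ofReal]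
      ring
    have hBexp : B = fun ω =>
        ((cb1:ℂ) * (starRingEnd ℂ) (Hbar1 m i)) * ((cb1:ℂ) * Hbar1 m j)
        + ((cb1:ℂ) * (starRingEnd ℂ) (Hbar1 m i) * (cb2:ℂ)) * G (Sum.inr (m, j)) ω
        + ((cb2:ℂ) * ((cb1:ℂ) * Hbar1 m j)) * (starRingEnd ℂ) (G (Sum.inr (m, i)) ω)
        + ((cb2:ℂ) * (cb2:ℂ))
            * ((starRingEnd ℂ) (G (Sum.inr (m, i)) ω) * G (Sum.inr (m, j)) ω) := by
      funext ω
      simp only [hBdef, _root_.map_add, _root_.map_mul, Complex.conj_ofReal]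
      ring
    -- the mixed second moment of the Y's
    have hYYint : Integrable
        (fun ω => (starRingEnd ℂ) (G (Sum.inr (m, i)) ω) * G (Sum.inr (m, j)) ω) μ := by
      by_cases hij : i = j
      · subst hij; exact hsqI _
      · have hind : IndepFun (fun ω => (starRingEnd ℂ) (G (Sum.inr (m, i)) ω))
            (G (Sum.inr (m, j))) μ :=
          (hindep.indepFun (show (Sum.inr (m, i) : Fin M ⊕ Fin M × Fin N) ≠ Sum.inr (m, j)
            by simp [hij])).comp hconjmeas measurable_id
        exact hind.integrable_mul (hconjint _) (hint _)
    have hYYval : ∫ ω, (starRingEnd ℂ) (G (Sum.inr (m, i)) ω) * G (Sum.inr (m, j)) ω ∂μ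
        = (if i = j then 1 else 0) := by
      by_cases hij : i = j
      · subst hij; rw [if_pos rfl]; exact hsqE _
      · have hind : IndepFun (fun ω => (starRingEnd ℂ) (G (Sum.inr (m, i)) ω))
            (G (Sum.inr (m, j))) μ :=
          (hindep.indepFun (show (Sum.inr (m, i) : Fin M ⊕ Fin M × Fin N) ≠ Sum.inr (m, j)
            by simp [hij])).comp hconjmeas measurable_id
        rw [if_neg hij, indepFun_integral_mul' hind (hconjint _) (hint _), hmeanconj, zero_mul]
    -- integrability and values of A and B
    have iA1 : Integrable (fun _ : Ω =>
        ((db1:ℂ) * (starRingEnd ℂ) (hbar2 m)) * ((db1:ℂ) * hbar2 m)) μ := integrable_const _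
    have iA2 : Integrable (fun ω => ((db1:ℂ) * (starRingEnd ℂ) (hbar2 m) * (db2:ℂ))
        * G (Sum.inl m) ω) μ := (hint _).const_mul _
    have iA3 : Integrable (fun ω => ((db2:ℂ) * ((db1:ℂ) * hbar2 m))
        * (starRingEnd ℂ) (G (Sum.inl m) ω)) μ := (hconjint _).const_mul _
    have iA4 : Integrable (fun ω => ((db2:ℂ) * (db2:ℂ))
        * ((starRingEnd ℂ) (G (Sum.inl m) ω) * G (Sum.inl m) ω)) μ := (hsqI _).const_mul _
    have iA12 : Integrable (fun ω =>
        ((db1:ℂ) * (starRingEnd ℂ) (hbar2 m)) * ((db1:ℂ) * hbar2 m)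
        + ((db1:ℂ) * (starRingEnd ℂ) (hbar2 m) * (db2:ℂ)) * G (Sum.inl m) ω) μ := iA1.add iA2
    have iA123 : Integrable (fun ω =>
        ((db1:ℂ) * (starRingEnd ℂ) (hbar2 m)) * ((db1:ℂ) * hbar2 m)
        + ((db1:ℂ) * (starRingEnd ℂ) (hbar2 m) * (db2:ℂ)) * G (Sum.inl m) ω
        + ((db2:ℂ) * ((db1:ℂ) * hbar2 m)) * (starRingEnd ℂ) (G (Sum.inl m) ω)) μ := iA12.add iA3
    have hAint : Integrable A μ := by rw [hAexp]; exact iA123.add iA4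
    have hAval : ∫ ω, A ω ∂μ
        = ((db1 * db1 : ℝ) : ℂ) * ((‖hbar2 m‖ ^ 2 : ℝ) : ℂ) + ((db2 * db2 : ℝ) : ℂ) := by
      rw [hAexp]
      rw [integral_add iA123 iA4, integral_add iA12 iA3, integral_add iA1 iA2]
      rw [integral_const, integral_const_mul, integral_const_mul, integral_const_mul,
        hmean, hmeanconj, hsqE]
      simp only [measure_univ, probReal_univ, ENNReal.toReal_one, one_smul, mul_zero, zero_add, add_zero]
      rw [show ((db1:ℂ) * (starRingEnd ℂ) (hbar2 m)) * ((db1:ℂ) * hbar2 m)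
          = ((db1 * db1 : ℝ) : ℂ) * ((starRingEnd ℂ) (hbar2 m) * hbar2 m) by
        push_cast; ring]
      rw [conj_mul_self']
      push_cast
      ring
    have iB1 : Integrable (fun _ : Ω =>
        ((cb1:ℂ) * (starRingEnd ℂ) (Hbar1 m i)) * ((cb1:ℂ) * Hbar1 m j)) μ := integrable_const _
    have iB2 : Integrable (fun ω => ((cb1:ℂ) * (starRingEnd ℂ) (Hbar1 m i) * (cb2:ℂ))
        * G (Sum.inr (m, j)) ω) μ := (hint _).const_mul _
    have iB3 : Integrable (fun ω => ((cb2:ℂ) * ((cb1:ℂ) * Hbar1 m j))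
        * (starRingEnd ℂ) (G (Sum.inr (m, i)) ω)) μ := (hconjint _).const_mul _
    have iB4 : Integrable (fun ω => ((cb2:ℂ) * (cb2:ℂ))
        * ((starRingEnd ℂ) (G (Sum.inr (m, i)) ω) * G (Sum.inr (m, j)) ω)) μ :=
      hYYint.const_mul _
    have iB12 : Integrable (fun ω =>
        ((cb1:ℂ) * (starRingEnd ℂ) (Hbar1 m i)) * ((cb1:ℂ) * Hbar1 m j)
        + ((cb1:ℂ) * (starRingEnd ℂ) (Hbar1 m i) * (cb2:ℂ)) * G (Sum.inr (m, j)) ω) μ :=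
      iB1.add iB2
    have iB123 : Integrable (fun ω =>
        ((cb1:ℂ) * (starRingEnd ℂ) (Hbar1 m i)) * ((cb1:ℂ) * Hbar1 m j)
        + ((cb1:ℂ) * (starRingEnd ℂ) (Hbar1 m i) * (cb2:ℂ)) * G (Sum.inr (m, j)) ω
        + ((cb2:ℂ) * ((cb1:ℂ) * Hbar1 m j)) * (starRingEnd ℂ) (G (Sum.inr (m, i)) ω)) μ :=
      iB12.add iB3
    have hBint : Integrable B μ := by rw [hBexp]; exact iB123.add iB4
    have hBval : ∫ ω, B ω ∂μ
        = ((cb1 * cb1 : ℝ) : ℂ) * ((starRingEnd ℂ) (Hbar1 m i) * Hbar1 m j)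
          + ((cb2 * cb2 : ℝ) : ℂ) * (if i = j then 1 else 0) := by
      rw [hBexp]
      rw [integral_add iB123 iB4, integral_add iB12 iB3, integral_add iB1 iB2]
      rw [integral_const, integral_const_mul, integral_const_mul, integral_const_mul,
        hmean, hmeanconj, hYYval]
      simp only [measure_univ, probReal_univ, ENNReal.toReal_one, one_smul, mul_zero, zero_add, add_zero]
      push_cast
      ring
    have hABind : IndepFun A B μ := by
      have base : IndepFun (fun ω => (G (Sum.inr (m, i)) ω, G (Sum.inr (m, j)) ω))
          (G (Sum.inl m)) μ :=
        hindep.indepFun_prodMk hmeas _ _ _ (by simp) (by simp)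
      have hψA : Measurable (fun x : ℂ =>
          (starRingEnd ℂ) ((db1:ℂ) * hbar2 m + (db2:ℂ) * x)
            * ((db1:ℂ) * hbar2 m + (db2:ℂ) * x)) := by fun_prop
      have hψB : Measurable (fun p : ℂ × ℂ =>
          (starRingEnd ℂ) ((cb1:ℂ) * Hbar1 m i + (cb2:ℂ) * p.1)
            * ((cb1:ℂ) * Hbar1 m j + (cb2:ℂ) * p.2)) := by fun_prop
      exact base.symm.comp hψA hψB
    have hABI : Integrable (fun ω => A ω * B ω) μ := by
      exact hABind.integrable_mul hAint hBint
    constructor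
    · rw [hptw]; exact hABI
    · rw [hptw, indepFun_integral_mul' hABind hAint hBint, hAval, hBval]
  -- combined key formula
  have hkeyval : ∀ (i j : Fin N) (m n : Fin M),
      ∫ ω, (starRingEnd ℂ) (t m i ω) * t n j ω ∂μ =
        (starRingEnd ℂ) (Et m i) * Et n j +
        (if m = n then
          ((((db1 * db1 : ℝ) : ℂ) * ((‖hbar2 m‖ ^ 2 : ℝ) : ℂ) + ((db2 * db2 : ℝ) : ℂ))
            * (((cb1 * cb1 : ℝ) : ℂ) * ((starRingEnd ℂ) (Hbar1 m i) * Hbar1 m j)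
                + ((cb2 * cb2 : ℝ) : ℂ) * (if i = j then 1 else 0))
            - (starRingEnd ℂ) (Et m i) * Et m j)
         else 0) := by
    intro i j m n
    by_cases hmn : m = n
    · subst hmn; rw [if_pos rfl, (hdiag i j m).2]; ring
    · rw [if_neg hmn, (hoff i j m n hmn).2, add_zero]
  have hprodint : ∀ (i j : Fin N) (m n : Fin M),
      Integrable (fun ω => (starRingEnd ℂ) (t m i ω) * t n j ω) μ := by
    intro i j m n
    by_cases hmn : m = n
    · subst hmn; exact (hdiag i j m).1
    · exact (hoff i j m n hmn).1
  -- reduce the matrix entry to the double sum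
  have hentry : ∀ (i j : Fin N),
      ∫ ω, ((H1 ω)ᴴ * Ξ.map (starRingEnd ℂ)
          * Matrix.vecMulVec (fun m => (starRingEnd ℂ) (h2 ω m)) (h2 ω)
          * Ξ * H1 ω) i j ∂μ
      = ∑ m, ∑ n, ∫ ω, (starRingEnd ℂ) (t m i ω) * t n j ω ∂μ := by
    intro i j
    have h1 : (fun ω => ((H1 ω)ᴴ * Ξ.map (starRingEnd ℂ)
        * Matrix.vecMulVec (fun m => (starRingEnd ℂ) (h2 ω m)) (h2 ω)
        * Ξ * H1 ω) i j)
        = fun ω => ∑ m, ∑ n, (starRingEnd ℂ) (t m i ω) * t n j ω := by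
      funext ω
      rw [hΞ, entry_rank_one ξ (h2 ω) (H1 ω) i j, hst, hst, _root_.map_sum, Finset.sum_mul]
      exact Finset.sum_congr rfl fun m _ => by rw [Finset.mul_sum]
    rw [h1, integral_finset_sum _ (fun m _ =>
      integrable_finset_sum _ (fun n _ => hprodint i j m n))]
    exact Finset.sum_congr rfl fun m _ =>
      integral_finset_sum _ (fun n _ => hprodint i j m n)
  -- deterministic sums
  set sb : Fin N → ℂ := fun j => ∑ m, ξ m * hbar2 m * Hbar1 m j with hsbdef
  have hT : ∀ jj, (∑ m, Et m jj) = (db1 : ℂ) * (cb1 : ℂ) * sb jj := by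
    intro jj
    simp only [hEtdef, hsbdef, Finset.mul_sum]
    exact Finset.sum_congr rfl fun m _ => by ring
  have hR : ∀ (i j : Fin N) (m : Fin M), (starRingEnd ℂ) (Et m i) * Et m j
      = ((db1 * db1 : ℝ) : ℂ) * ((‖hbar2 m‖ ^ 2 : ℝ) : ℂ)
        * (((cb1 * cb1 : ℝ) : ℂ) * ((starRingEnd ℂ) (Hbar1 m i) * Hbar1 m j)) := by
    intro i j m
    simp only [hEtdef, _root_.map_mul, Complex.conj_ofReal]
    rw [show (starRingEnd ℂ) (ξ m) * ((db1:ℂ) * (starRingEnd ℂ) (hbar2 m))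
          * ((cb1:ℂ) * (starRingEnd ℂ) (Hbar1 m i))
          * (ξ m * ((db1:ℂ) * hbar2 m) * ((cb1:ℂ) * Hbar1 m j))
        = ((starRingEnd ℂ) (ξ m) * ξ m) * (((db1:ℂ) * (db1:ℂ))
            * ((starRingEnd ℂ) (hbar2 m) * hbar2 m))
          * (((cb1:ℂ) * (cb1:ℂ)) * ((starRingEnd ℂ) (Hbar1 m i) * Hbar1 m j)) from by ring,
      hxi1, conj_mul_self']
    push_cast
    ring
  have hHbb : ∀ (i j : Fin N) (m : Fin M),
      (starRingEnd ℂ) (Hbar1 m i) * Hbar1 m j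
        = ((‖a m‖ ^ 2 : ℝ) : ℂ) * (b i * (starRingEnd ℂ) (b j)) := by
    intro i j m
    rw [hHbar1]
    simp only [Matrix.vecMulVec_apply, _root_.map_mul, Complex.conj_conj]
    rw [show (starRingEnd ℂ) (a m) * b i * (a m * (starRingEnd ℂ) (b j))
        = ((starRingEnd ℂ) (a m) * a m) * (b i * (starRingEnd ℂ) (b j)) from by ring,
      conj_mul_self']
  have hsumh : (∑ m, ((‖hbar2 m‖ ^ 2 : ℝ) : ℂ)) = ((M : ℝ) : ℂ) := by
    rw [← Complex.ofReal_sum, hhbar2]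
  have hsuma : (∑ m, ((‖a m‖ ^ 2 : ℝ) : ℂ)) = ((M : ℝ) : ℂ) := by
    rw [← Complex.ofReal_sum, ha]
  -- coefficient identities
  have hco1 : ((db1 * db1 : ℝ) : ℂ) * ((cb1 * cb1 : ℝ) : ℂ)
      = ((δ1 * δ2 * κ1 * κ2 / ((1 + κ1) * (1 + κ2)) : ℝ) : ℂ) := by
    rw [← Complex.ofReal_mul, hdb1, hcb1]
    norm_cast
    field_simp
  have hco2 : ((db2 * db2 : ℝ) : ℂ) * ((cb1 * cb1 : ℝ) : ℂ) * ((M : ℝ) : ℂ)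
      = ((M * δ1 * δ2 * κ1 / ((1 + κ1) * (1 + κ2)) : ℝ) : ℂ) := by
    rw [← Complex.ofReal_mul, ← Complex.ofReal_mul, hdb2, hcb1]
    norm_cast
    field_simp
  have hco3 : ((db1 * db1 : ℝ) : ℂ) * ((cb2 * cb2 : ℝ) : ℂ) * ((M : ℝ) : ℂ)
        + ((db2 * db2 : ℝ) : ℂ) * ((cb2 * cb2 : ℝ) : ℂ) * ((M : ℝ) : ℂ)
      = ((M * δ1 * δ2 / (1 + κ1) : ℝ) : ℂ) := by
    rw [← Complex.ofReal_mul, ← Complex.ofReal_mul, ← Complex.ofReal_mul,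
      ← Complex.ofReal_mul, ← Complex.ofReal_add, hdb1, hdb2, hcb2]
    norm_cast
    field_simp
    ring
  -- finish entrywise
  ext i j
  rw [Matrix.of_apply, hentry i j]
  have hRHS : (((M * δ1 * δ2 / (1 + κ1) : ℝ) : ℂ) • (1 : Matrix (Fin N) (Fin N) ℂ)
        + ((M * δ1 * δ2 * κ1 / ((1 + κ1) * (1 + κ2)) : ℝ) : ℂ) •
            Matrix.vecMulVec b (fun j => (starRingEnd ℂ) (b j))
        + ((δ1 * δ2 * κ1 * κ2 / ((1 + κ1) * (1 + κ2)) : ℝ) : ℂ) •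
            (Hbar1ᴴ * Ξ.map (starRingEnd ℂ)
              * Matrix.vecMulVec (fun m => (starRingEnd ℂ) (hbar2 m)) hbar2
              * Ξ * Hbar1)) i j
      = ((M * δ1 * δ2 / (1 + κ1) : ℝ) : ℂ) * (if i = j then 1 else 0)
        + ((M * δ1 * δ2 * κ1 / ((1 + κ1) * (1 + κ2)) : ℝ) : ℂ)
            * (b i * (starRingEnd ℂ) (b j))
        + ((δ1 * δ2 * κ1 * κ2 / ((1 + κ1) * (1 + κ2)) : ℝ) : ℂ)
            * ((starRingEnd ℂ) (sb i) * sb j) := by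
    rw [hΞ]
    simp only [Matrix.add_apply, Matrix.smul_apply, smul_eq_mul, Matrix.one_apply,
      Matrix.vecMulVec_apply, entry_rank_one ξ hbar2 Hbar1 i j, hsbdef]
  rw [hRHS]
  -- now compute the double sum
  have hstep : ∀ m : Fin M, (∑ n, ∫ ω, (starRingEnd ℂ) (t m i ω) * t n j ω ∂μ)
      = (starRingEnd ℂ) (Et m i) * (∑ n, Et n j)
        + (((((db1 * db1 : ℝ) : ℂ) * ((‖hbar2 m‖ ^ 2 : ℝ) : ℂ) + ((db2 * db2 : ℝ) : ℂ))
            * (((cb1 * cb1 : ℝ) : ℂ) * ((starRingEnd ℂ) (Hbar1 m i) * Hbar1 m j)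
                + ((cb2 * cb2 : ℝ) : ℂ) * (if i = j then 1 else 0))
            - (starRingEnd ℂ) (Et m i) * Et m j)) := by
    intro m
    simp only [hkeyval i j m]
    rw [Finset.sum_add_distrib, ← Finset.mul_sum, Finset.sum_ite_eq, if_pos (Finset.mem_univ m)]
  simp only [hstep]
  rw [Finset.sum_add_distrib, ← Finset.sum_mul, ← _root_.map_sum, hT i, hT j]
  -- simplify the diagonal extras
  have hextra : ∀ m : Fin M,
      ((((db1 * db1 : ℝ) : ℂ) * ((‖hbar2 m‖ ^ 2 : ℝ) : ℂ) + ((db2 * db2 : ℝ) : ℂ))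
        * (((cb1 * cb1 : ℝ) : ℂ) * ((starRingEnd ℂ) (Hbar1 m i) * Hbar1 m j)
            + ((cb2 * cb2 : ℝ) : ℂ) * (if i = j then 1 else 0))
        - (starRingEnd ℂ) (Et m i) * Et m j)
      = ((db1 * db1 : ℝ) : ℂ) * ((cb2 * cb2 : ℝ) : ℂ) * ((‖hbar2 m‖ ^ 2 : ℝ) : ℂ)
          * (if i = j then 1 else 0)
        + ((db2 * db2 : ℝ) : ℂ) * ((cb1 * cb1 : ℝ) : ℂ) * ((‖a m‖ ^ 2 : ℝ) : ℂ)
          * (b i * (starRingEnd ℂ) (b j))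
        + ((db2 * db2 : ℝ) : ℂ) * ((cb2 * cb2 : ℝ) : ℂ) * (if i = j then 1 else 0) := by
    intro m
    rw [hR i j m, hHbb i j m]
    ring
  simp only [hextra]
  rw [Finset.sum_add_distrib, Finset.sum_add_distrib]
  rw [show (∑ m, ((db1 * db1 : ℝ) : ℂ) * ((cb2 * cb2 : ℝ) : ℂ) * ((‖hbar2 m‖ ^ 2 : ℝ) : ℂ)
        * (if i = j then 1 else 0))
      = ((db1 * db1 : ℝ) : ℂ) * ((cb2 * cb2 : ℝ) : ℂ) * ((M : ℝ) : ℂ)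
        * (if i = j then 1 else 0) from by
    rw [← Finset.sum_mul, ← Finset.mul_sum, hsumh]]
  rw [show (∑ m, ((db2 * db2 : ℝ) : ℂ) * ((cb1 * cb1 : ℝ) : ℂ) * ((‖a m‖ ^ 2 : ℝ) : ℂ)
        * (b i * (starRingEnd ℂ) (b j)))
      = ((db2 * db2 : ℝ) : ℂ) * ((cb1 * cb1 : ℝ) : ℂ) * ((M : ℝ) : ℂ)
        * (b i * (starRingEnd ℂ) (b j)) from by
    rw [← Finset.sum_mul, ← Finset.mul_sum, hsuma]]
  rw [Finset.sum_const, Finset.card_univ, Fintype.card_fin]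
  -- final algebra
  rw [show (starRingEnd ℂ) ((db1:ℂ) * (cb1:ℂ) * sb i) * ((db1:ℂ) * (cb1:ℂ) * sb j)
      = (((db1 * db1 : ℝ):ℂ) * ((cb1 * cb1 : ℝ):ℂ)) * ((starRingEnd ℂ) (sb i) * sb j) from by
    simp only [_root_.map_mul, Complex.conj_ofReal]
    push_cast
    ring]
  rw [nsmul_eq_mul, ← hco1, ← hco2, ← hco3]
  push_cast
  ring

end
end
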